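/- Let k be an algebraically closed field of characteristic not 2, and let σ be a k-algebra involution of the power series ring k[[t]]. Then the differential of σ acts on the cotangent space as multiplication by a scalar ξ ∈ k satisfying ξ² = 1, and if φ is the k-algebra endomorphism of k[[t]] determined by t ↦ (t + ξ·σ(t))/2, then φ is an automorphism and φ⁻¹ ∘ σ ∘ φ is the involution determined by t ↦ ξ·t. -/

import Mathlib

/-!
**Statement 0.** Let `k` be an algebraically closed field of characteristic not 2, and let `σ`
be a `k`-algebra involution of the power series ring `k[[t]]`. Then the differential of `σ`
acts on the cotangent space as multiplication by a scalar `ξ ∈ k` with `ξ² = 1` (i.e. the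
coefficient of `t` in `σ(t)` is `ξ`), and if `φ` is the `k`-algebra endomorphism of `k[[t]]`
determined by `t ↦ (t + ξ·σ(t))/2`, then `φ` is an automorphism and `φ⁻¹ ∘ σ ∘ φ` is the
involution determined by `t ↦ ξ·t` (that is, it equals `PowerSeries.rescale ξ`).
-/

open PowerSeries

namespace Stmt0Aux

variable {k : Type*} [Field k]

lemma X_pow_dvd_aeval {u : k⟦X⟧} (hu : constantCoeff u = 0)
    {p : Polynomial k} {n : ℕ} (hp : ∀ i ≤ n, p.coeff i = 0) :
    (X : k⟦X⟧) ^ (n + 1) ∣ Polynomial.aeval u p := by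
  obtain ⟨q, hq⟩ : (Polynomial.X : Polynomial k) ^ (n + 1) ∣ p := by
    rw [Polynomial.X_pow_dvd_iff]
    exact fun d hd => hp d (Nat.lt_succ_iff.mp hd)
  obtain ⟨v, hv⟩ : (X : k⟦X⟧) ∣ u := X_dvd_iff.mpr hu
  rw [hq, map_mul, map_pow, Polynomial.aeval_X, hv]
  exact dvd_mul_of_dvd_left (by rw [mul_pow]; exact dvd_mul_right _ _) _

lemma coeff_aeval_congr {u : k⟦X⟧} (hu : constantCoeff u = 0)
    {p q : Polynomial k} {n : ℕ} (h : ∀ i ≤ n, p.coeff i = q.coeff i) :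
    coeff n (Polynomial.aeval u p) = coeff n (Polynomial.aeval u q) := by
  have h0 : coeff n (Polynomial.aeval u (p - q)) = 0 :=
    X_pow_dvd_iff.mp (X_pow_dvd_aeval hu (p := p - q)
      (fun i hi => by simp [h i hi])) n (Nat.lt_succ_self n)
  rw [map_sub, map_sub] at h0
  exact sub_eq_zero.mp h0

/-- Substitution of `u` into `f` (i.e. `f ∘ u`). -/
noncomputable def substFun (u f : k⟦X⟧) : k⟦X⟧ :=
  mk fun n => coeff n (Polynomial.aeval u (trunc (n + 1) f))

lemma coeff_substFun (u f : k⟦X⟧) (n : ℕ) :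
    coeff n (substFun u f) = coeff n (Polynomial.aeval u (trunc (n + 1) f)) :=
  coeff_mk _ _

lemma coeff_substFun_trunc {u : k⟦X⟧} (hu : constantCoeff u = 0) (f : k⟦X⟧)
    {n m : ℕ} (h : n < m) :
    coeff n (substFun u f) = coeff n (Polynomial.aeval u (trunc m f)) := by
  rw [coeff_substFun]
  refine coeff_aeval_congr hu fun i hi => ?_
  rw [coeff_trunc, coeff_trunc, if_pos (Nat.lt_succ_of_le hi), if_pos (lt_of_le_of_lt hi h)]

lemma substFun_one (u : k⟦X⟧) : substFun u 1 = 1 := by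
  ext n
  rw [coeff_substFun, trunc_one, map_one]

lemma substFun_add (u f g : k⟦X⟧) : substFun u (f + g) = substFun u f + substFun u g := by
  ext n
  rw [map_add, coeff_substFun, coeff_substFun, coeff_substFun, map_add, map_add, map_add]

lemma substFun_mul {u : k⟦X⟧} (hu : constantCoeff u = 0) (f g : k⟦X⟧) :
    substFun u (f * g) = substFun u f * substFun u g := by
  ext n
  calc coeff n (substFun u (f * g))
      = coeff n (Polynomial.aeval u (trunc (n + 1) f * trunc (n + 1) g)) := by
        rw [coeff_substFun]
        refine coeff_aeval_congr hu fun i hi => ?_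
        rw [coeff_trunc, if_pos (Nat.lt_succ_of_le hi), PowerSeries.coeff_mul,
          Polynomial.coeff_mul]
        refine Finset.sum_congr rfl fun x hx => ?_
        have hx' := Finset.HasAntidiagonal.mem_antidiagonal.mp hx
        have h1 : x.1 < n + 1 :=
          Nat.lt_succ_of_le (le_trans (le_trans (Nat.le_add_right _ _) hx'.le) hi)
        have h2 : x.2 < n + 1 :=
          Nat.lt_succ_of_le (le_trans (le_trans (Nat.le_add_left _ _) hx'.le) hi)
        rw [coeff_trunc, coeff_trunc, if_pos h1, if_pos h2]
    _ = coeff n (Polynomial.aeval u (trunc (n + 1) f) *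
          Polynomial.aeval u (trunc (n + 1) g)) := by rw [map_mul]
    _ = coeff n (substFun u f * substFun u g) := by
        rw [PowerSeries.coeff_mul, PowerSeries.coeff_mul]
        refine Finset.sum_congr rfl fun x hx => ?_
        have hx' := Finset.HasAntidiagonal.mem_antidiagonal.mp hx
        have h1 : x.1 < n + 1 := Nat.lt_succ_of_le (le_trans (Nat.le_add_right _ _) hx'.le)
        have h2 : x.2 < n + 1 := Nat.lt_succ_of_le (le_trans (Nat.le_add_left _ _) hx'.le)
        rw [coeff_substFun_trunc hu f h1, coeff_substFun_trunc hu g h2]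

lemma substFun_C (u : k⟦X⟧) (a : k) : substFun u (C a) = C a := by
  ext n
  rw [coeff_substFun, trunc_C, Polynomial.aeval_C]
  simp [PowerSeries.algebraMap_apply]

lemma substFun_X {u : k⟦X⟧} (hu : constantCoeff u = 0) : substFun u X = u := by
  ext n
  rw [coeff_substFun_trunc hu X (show n < n + 2 by omega), trunc_X, Polynomial.aeval_X]

/-- The substitution algebra homomorphism `f ↦ f ∘ u`. -/
noncomputable def substAlgHom (u : k⟦X⟧) (hu : constantCoeff u = 0) :
    k⟦X⟧ →ₐ[k] k⟦X⟧ where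
  toFun := substFun u
  map_one' := substFun_one u
  map_mul' := substFun_mul hu
  map_zero' := by
    have := (substFun_add u 0 0).symm
    rw [add_zero] at this
    exact add_eq_right.mp this
  map_add' := substFun_add u
  commutes' := fun a => by
    rw [PowerSeries.algebraMap_apply]
    simpa using substFun_C u (algebraMap k k a)

@[simp] lemma substAlgHom_apply (u : k⟦X⟧) (hu : constantCoeff u = 0) (f : k⟦X⟧) :
    substAlgHom u hu f = substFun u f := rfl

lemma coeff_substFun_eq_sum (u f : k⟦X⟧) (n : ℕ) :
    coeff n (substFun u f)
      = ∑ m ∈ Finset.range (n + 1), coeff m f * coeff n (u ^ m) := by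
  rw [coeff_substFun, trunc_apply, map_sum, map_sum, Finset.range_eq_Ico]
  refine Finset.sum_congr rfl fun m hm => ?_
  rw [Polynomial.aeval_monomial, PowerSeries.algebraMap_apply]
  simp [PowerSeries.coeff_C_mul]

lemma coeff_pow_self {u : k⟦X⟧} (hu : constantCoeff u = 0) (n : ℕ) :
    coeff n (u ^ n) = (coeff 1 u) ^ n := by
  obtain ⟨v, hv⟩ : (X : k⟦X⟧) ∣ u := X_dvd_iff.mpr hu
  subst hv
  rw [mul_pow]
  have h1 := PowerSeries.coeff_X_pow_mul (v ^ n) n 0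
  rw [zero_add] at h1
  have h2 := PowerSeries.coeff_succ_X_mul 0 v
  rw [h1, coeff_zero_eq_constantCoeff, map_pow]
  norm_num

lemma coeff_pow_of_lt {u : k⟦X⟧} (hu : constantCoeff u = 0) {m n : ℕ} (h : n < m) :
    coeff n (u ^ m) = 0 := by
  have : (X : k⟦X⟧) ^ m ∣ u ^ m := pow_dvd_pow_of_dvd (X_dvd_iff.mpr hu) m
  exact X_pow_dvd_iff.mp this n h

lemma constantCoeff_substFun (u f : k⟦X⟧) :
    constantCoeff (substFun u f) = constantCoeff f := by
  rw [← coeff_zero_eq_constantCoeff_apply, coeff_substFun_eq_sum, Finset.sum_range_one]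
  simp

lemma coeff_one_substFun (u f : k⟦X⟧) :
    coeff 1 (substFun u f) = coeff 1 f * coeff 1 u := by
  rw [coeff_substFun_eq_sum, Finset.sum_range_succ, Finset.sum_range_one]
  simp [PowerSeries.coeff_one]

/-- Coefficients of the compositional inverse, defined recursively. -/
noncomputable def invCoeff (u : k⟦X⟧) : ℕ → k
  | 0 => 0
  | n + 1 =>
      ((if n + 1 = 1 then (1 : k) else 0) -
          ∑ m ∈ (Finset.range (n + 1)).attach, invCoeff u m.1 * coeff (n + 1) (u ^ m.1)) /
        (coeff 1 u) ^ (n + 1)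
  decreasing_by exact Finset.mem_range.mp m.2

lemma invCoeff_zero (u : k⟦X⟧) : invCoeff u 0 = 0 := by rw [invCoeff]

lemma invCoeff_succ (u : k⟦X⟧) (n : ℕ) :
    invCoeff u (n + 1) =
      ((if n + 1 = 1 then (1 : k) else 0) -
          ∑ m ∈ Finset.range (n + 1), invCoeff u m * coeff (n + 1) (u ^ m)) /
        (coeff 1 u) ^ (n + 1) := by
  rw [invCoeff, Finset.sum_attach _ (fun m => invCoeff u m * coeff (n + 1) (u ^ m))]

lemma substFun_rightInv {u : k⟦X⟧} (hu : constantCoeff u = 0)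
    (hu1 : coeff 1 u ≠ 0) : substFun u (mk (invCoeff u)) = X := by
  ext n
  rw [coeff_substFun_eq_sum, PowerSeries.coeff_X]
  cases n with
  | zero => simp [invCoeff_zero]
  | succ n =>
      rw [Finset.sum_range_succ, coeff_mk, coeff_pow_self hu, invCoeff_succ,
        div_mul_cancel₀ _ (pow_ne_zero _ hu1)]
      have : ∀ m ∈ Finset.range (n + 1),
          coeff m (mk (invCoeff u)) * coeff (n + 1) (u ^ m)
            = invCoeff u m * coeff (n + 1) (u ^ m) := fun m _ => by rw [coeff_mk]
      rw [Finset.sum_congr rfl this, add_sub_cancel]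

lemma algHom_eq_substFun (F : k⟦X⟧ →ₐ[k] k⟦X⟧) (hF : constantCoeff (F X) = 0)
    (f : k⟦X⟧) : F f = substFun (F X) f := by
  have hpoly : ∀ p : Polynomial k, F (p : k⟦X⟧) = Polynomial.aeval (F X) p := by
    intro p
    induction p using Polynomial.induction_on' with
    | add p q hp hq => rw [Polynomial.coe_add, map_add, hp, hq, map_add]
    | monomial i a =>
        have hm : (monomial i a : k⟦X⟧) = C a * X ^ i := by
          ext m
          rw [coeff_monomial, coeff_C_mul, coeff_X_pow]
          split_ifs <;> simp
        have hC : (C a : k⟦X⟧) = algebraMap k k⟦X⟧ a := by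
          rw [PowerSeries.algebraMap_apply]; simp
        rw [Polynomial.coe_monomial, hm, map_mul, map_pow, Polynomial.aeval_monomial,
          hC, AlgHom.commutes]
  ext n
  obtain ⟨r, hr⟩ : (X : k⟦X⟧) ^ (n + 1) ∣ f - ↑(trunc (n + 1) f) := by
    rw [X_pow_dvd_iff]
    intro m hm
    rw [map_sub, Polynomial.coeff_coe, coeff_trunc, if_pos hm, sub_self]
  have hf : f = ((trunc (n + 1) f : Polynomial k) : k⟦X⟧) + X ^ (n + 1) * r :=
    sub_eq_iff_eq_add'.mp hr
  have hFf : F f = Polynomial.aeval (F X) (trunc (n + 1) f) + (F X) ^ (n + 1) * F r := by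
    conv_lhs => rw [hf]
    rw [map_add, map_mul, map_pow, hpoly]
  rw [hFf, map_add]
  have hz : coeff n ((F X) ^ (n + 1) * F r) = 0 := by
    have : (X : k⟦X⟧) ^ (n + 1) ∣ (F X) ^ (n + 1) * F r :=
      dvd_mul_of_dvd_left (pow_dvd_pow_of_dvd (X_dvd_iff.mpr hF) _) _
    exact X_pow_dvd_iff.mp this n (Nat.lt_succ_self n)
  rw [hz, add_zero, coeff_substFun]

lemma algHom_ext {F G : k⟦X⟧ →ₐ[k] k⟦X⟧} (h0 : constantCoeff (F X) = 0)
    (hX : F X = G X) : F = G := by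
  have h0' : constantCoeff (G X) = 0 := hX ▸ h0
  exact AlgHom.ext fun f => by
    rw [algHom_eq_substFun F h0 f, algHom_eq_substFun G h0' f, hX]

lemma substFun_rescale (a : k) (f : k⟦X⟧) :
    substFun (C a * X) f = rescale a f := by
  ext n
  rw [coeff_substFun_eq_sum, coeff_rescale]
  rw [Finset.sum_eq_single n (fun m _ hm => by
    rw [mul_pow, ← map_pow, coeff_C_mul, coeff_X_pow, if_neg (Ne.symm hm)]
    ring) (fun hn => absurd (Finset.self_mem_range_succ n) hn)]
  rw [mul_pow, ← map_pow, coeff_C_mul, coeff_X_pow, if_pos rfl]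
  ring

end Stmt0Aux

open Stmt0Aux in
theorem stmt0 (k : Type*) [Field k] [IsAlgClosed k] (hchar : (2 : k) ≠ 0)
    (σ : PowerSeries k ≃ₐ[k] PowerSeries k) (hinv : ∀ f, σ (σ f) = f) :
    ∃ ξ : k, ξ ^ 2 = 1 ∧ PowerSeries.coeff 1 (σ PowerSeries.X) = ξ ∧
      ∃ φ : PowerSeries k ≃ₐ[k] PowerSeries k,
        φ PowerSeries.X
          = PowerSeries.C (2⁻¹ : k) *
              (PowerSeries.X + PowerSeries.C ξ * σ PowerSeries.X) ∧
        ∀ f : PowerSeries k, φ.symm (σ (φ f)) = PowerSeries.rescale ξ f := by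
  classical
  set ξ : k := coeff 1 (σ X) with hξdef
  -- σ X has zero constant term
  have hσ0 : constantCoeff (σ X) = 0 := by
    by_contra hc
    have hunit : IsUnit (σ X) := isUnit_iff_constantCoeff.mpr (isUnit_iff_ne_zero.mpr hc)
    have : IsUnit (X : k⟦X⟧) := by
      have := hunit.map σ.symm.toAlgHom
      simpa using this
    have := isUnit_iff_constantCoeff.mp this
    rw [constantCoeff_X] at this
    exact not_isUnit_zero this
  -- σ as substitution
  have hσsub : ∀ f, σ f = substFun (σ X) f := fun f => by
    have := algHom_eq_substFun σ.toAlgHom (by simpa using hσ0) f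
    simpa using this
  -- ξ² = 1
  have hξmul : ξ * ξ = 1 := by
    have h1 := congrArg (coeff 1) (hinv X)
    rw [hσsub (σ X), coeff_one_substFun, coeff_X, if_pos rfl] at h1
    exact h1
  have hξ2 : ξ ^ 2 = 1 := by rw [sq]; exact hξmul
  -- the series h
  set h : k⟦X⟧ := C (2⁻¹ : k) * (X + C ξ * σ X) with hhdef
  have hh0 : constantCoeff h = 0 := by
    rw [hhdef]
    simp [hσ0]
  have hh1 : coeff 1 h = 1 := by
    rw [hhdef, coeff_C_mul, map_add, coeff_C_mul, coeff_X, if_pos rfl, ← hξdef, hξmul]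
    rw [← one_add_one_eq_two] at hchar ⊢
    field_simp
  -- right inverse g of h
  set g : k⟦X⟧ := mk (invCoeff h) with hgdef
  have hg0 : constantCoeff g = 0 := by
    rw [hgdef, ← coeff_zero_eq_constantCoeff_apply, coeff_mk, invCoeff_zero]
  have hgh : substFun h g = X := substFun_rightInv hh0 (hh1 ▸ one_ne_zero)
  have hg1 : coeff 1 g ≠ 0 := by
    intro hc
    have := congrArg (coeff 1) hgh
    rw [coeff_one_substFun, hc, zero_mul, coeff_X, if_pos rfl] at this
    exact one_ne_zero this.symm
  -- w : right inverse of g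
  set w : k⟦X⟧ := mk (invCoeff g) with hwdef
  have hw0 : constantCoeff w = 0 := by
    rw [hwdef, ← coeff_zero_eq_constantCoeff_apply, coeff_mk, invCoeff_zero]
  have hwg : substFun g w = X := substFun_rightInv hg0 hg1
  -- the algebra maps
  set A : k⟦X⟧ →ₐ[k] k⟦X⟧ := substAlgHom h hh0 with hAdef
  set B : k⟦X⟧ →ₐ[k] k⟦X⟧ := substAlgHom g hg0 with hBdef
  set W : k⟦X⟧ →ₐ[k] k⟦X⟧ := substAlgHom w hw0 with hWdef
  have hAX : A X = h := substFun_X hh0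
  have hBX : B X = g := substFun_X hg0
  have hWX : W X = w := substFun_X hw0
  have hAB : A.comp B = AlgHom.id k k⟦X⟧ := by
    refine algHom_ext ?_ ?_
    · rw [AlgHom.comp_apply, hBX]
      show constantCoeff (substFun h g) = 0
      rw [hgh, constantCoeff_X]
    · rw [AlgHom.comp_apply, hBX, AlgHom.id_apply]
      exact hgh
  have hBW : B.comp W = AlgHom.id k k⟦X⟧ := by
    refine algHom_ext ?_ ?_
    · rw [AlgHom.comp_apply, hWX]
      show constantCoeff (substFun g w) = 0
      rw [hwg, constantCoeff_X]
    · rw [AlgHom.comp_apply, hWX, AlgHom.id_apply]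
      exact hwg
  have hWA : W = A := by
    calc W = (AlgHom.id k k⟦X⟧).comp W := (AlgHom.id_comp W).symm
    _ = (A.comp B).comp W := by rw [hAB]
    _ = A.comp (B.comp W) := AlgHom.comp_assoc _ _ _
    _ = A := by rw [hBW, AlgHom.comp_id]
  have hBA : B.comp A = AlgHom.id k k⟦X⟧ := by rw [← hWA]; exact hBW
  -- the automorphism φ
  set φ : k⟦X⟧ ≃ₐ[k] k⟦X⟧ := AlgEquiv.ofAlgHom A B hAB hBA with hφdef
  refine ⟨ξ, hξ2, rfl, φ, ?_, ?_⟩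
  · show A X = C (2⁻¹ : k) * (X + C ξ * σ X)
    rw [hAX]
  · -- rescale as substitution
    have hR0 : constantCoeff (C ξ * X) = 0 := by simp
    set R : k⟦X⟧ →ₐ[k] k⟦X⟧ := substAlgHom (C ξ * X) hR0 with hRdef
    have hRX : R X = C ξ * X := substFun_X hR0
    have hRf : ∀ f, R f = rescale ξ f := fun f => substFun_rescale ξ f
    -- σ ∘ A = A ∘ R
    have hkey : σ.toAlgHom.comp A = A.comp R := by
      refine algHom_ext ?_ ?_
      · rw [AlgHom.comp_apply, hAX]
        show constantCoeff (σ h) = 0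
        rw [hσsub h, constantCoeff_substFun, hh0]
      · rw [AlgHom.comp_apply, AlgHom.comp_apply, hAX, hRX]
        show σ h = A (C ξ * X)
        have hAC : A (C ξ * X) = C ξ * h := by
          rw [map_mul, hAX]
          congr 1
          exact substFun_C h ξ
        have hσh : σ h = C (2⁻¹ : k) * (σ X + C ξ * X) := by
          have hσC : ∀ a : k, σ (C a) = C a := fun a => by
            have : (C a : k⟦X⟧) = algebraMap k k⟦X⟧ a := by
              rw [PowerSeries.algebraMap_apply]; simp
            rw [this, AlgEquiv.commutes]
          rw [hhdef, map_mul, map_add, map_mul, hσC, hσC, hinv X]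
        rw [hσh, hAC, hhdef]
        have hCξ : C ξ * C ξ = 1 := by rw [← map_mul, hξmul, map_one]
        linear_combination (-(C (2⁻¹ : k) * σ X)) * hCξ
    intro f
    have h1 : σ (φ f) = A (R f) := by
      show σ (A f) = A (R f)
      have := congrArg (fun F => F f) hkey
      simpa using this
    show φ.symm (σ (φ f)) = rescale ξ f
    rw [h1, ← hRf f]
    show B (A (R f)) = R f
    have := congrArg (fun F => F (R f)) hBA
    simpa using this
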